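/- Let μ be a nonzero finite Borel measure on ℝ whose support is bounded below, let λ := inf(supp μ), and set L(t) := ∫ e^{−s t} dμ(s) for t ≥ 0. Then the following are equivalent: (i) sup_{t>0} e^{−λ t}/L(t) < ∞; (ii) sup_{t>0} L(2t)/L(t)² < ∞; (iii) μ({λ}) > 0. Moreover, if these conditions hold, then lim_{t→∞} e^{−λ t}/L(t) = 1/μ({λ}) and lim_{t→∞} L(2t)/L(t)² = 1/μ({λ}). -/

import Mathlib

open MeasureTheory Filter Topology

noncomputable section

/-- The topological support of a Borel measure on `ℝ`: the set of points all of whose open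
neighborhoods have positive measure. -/
def msupp (μ : Measure ℝ) : Set ℝ :=
  {x | ∀ U : Set ℝ, IsOpen U → x ∈ U → 0 < μ U}

/-- The Laplace-type transform `L(t) = ∫ e^{-s t} dμ(s)`. -/
def laplace (μ : Measure ℝ) (t : ℝ) : ℝ :=
  ∫ s, Real.exp (-s * t) ∂μ

namespace Stmt19Aux

lemma amgm (c x : ℝ) (hc : 0 < c) : x ≤ c / 2 + x ^ 2 / (2 * c) := by
  rw [div_add_div _ _ two_ne_zero (by positivity), le_div_iff₀ (by positivity)]
  nlinarith [sq_nonneg (x - c)]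

lemma compl_msupp_null (μ : Measure ℝ) : μ (msupp μ)ᶜ = 0 := by
  apply measure_null_of_locally_null
  intro x hx
  simp only [msupp, Set.mem_compl_iff, Set.mem_setOf_eq] at hx
  push_neg at hx
  obtain ⟨U, hUo, hxU, hU⟩ := hx
  exact ⟨U, mem_nhdsWithin_of_mem_nhds (hUo.mem_nhds hxU),
    le_antisymm hU zero_le⟩

lemma msupp_nonempty (μ : Measure ℝ) (hμ : μ ≠ 0) : (msupp μ).Nonempty := by
  rw [Set.nonempty_iff_ne_empty]
  intro h
  apply hμ
  have h2 := compl_msupp_null μ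
  rw [h, Set.compl_empty] at h2
  exact Measure.measure_univ_eq_zero.mp h2

lemma msupp_closed (μ : Measure ℝ) : IsClosed (msupp μ) := by
  rw [← isOpen_compl_iff, isOpen_iff_forall_mem_open]
  intro x hx
  simp only [msupp, Set.mem_compl_iff, Set.mem_setOf_eq] at hx
  push_neg at hx
  obtain ⟨U, hUo, hxU, hU⟩ := hx
  exact ⟨U, fun y hy hymem => ((hymem U hUo hy).not_ge hU).elim, hUo, hxU⟩

end Stmt19Aux

open Stmt19Aux in
/-- with `λ = inf (supp μ)` and `L(t) = ∫ e^{-s t} dμ(s)`, the conditions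
(i) `sup_{t>0} e^{-λ t}/L(t) < ∞`, (ii) `sup_{t>0} L(2t)/L(t)² < ∞` and (iii) `μ({λ}) > 0`
are equivalent; moreover if they hold then `e^{-λ t}/L(t) → 1/μ({λ})` and
`L(2t)/L(t)² → 1/μ({λ})` as `t → ∞`. -/
theorem stmt_19 (μ : Measure ℝ) [IsFiniteMeasure μ] (hμ : μ ≠ 0)
    (hbdd : BddBelow (msupp μ)) :
    ((∃ C : ℝ, ∀ t : ℝ, 0 < t →
        Real.exp (-sInf (msupp μ) * t) / laplace μ t ≤ C)
      ↔ 0 < μ {sInf (msupp μ)}) ∧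
    ((∃ C : ℝ, ∀ t : ℝ, 0 < t →
        laplace μ (2 * t) / (laplace μ t) ^ 2 ≤ C)
      ↔ 0 < μ {sInf (msupp μ)}) ∧
    (0 < μ {sInf (msupp μ)} →
      Tendsto (fun t => Real.exp (-sInf (msupp μ) * t) / laplace μ t)
        atTop (nhds (1 / (μ {sInf (msupp μ)}).toReal)) ∧
      Tendsto (fun t => laplace μ (2 * t) / (laplace μ t) ^ 2)
        atTop (nhds (1 / (μ {sInf (msupp μ)}).toReal))) := by
  have hNZ : NeZero μ := ⟨hμ⟩
  set l := sInf (msupp μ) with hl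
  have hne : (msupp μ).Nonempty := msupp_nonempty μ hμ
  have hlmem : l ∈ msupp μ := (msupp_closed μ).csInf_mem hne hbdd
  have hIio : μ (Set.Iio l) = 0 := by
    apply measure_mono_null _ (compl_msupp_null μ)
    intro x hx hxs
    exact absurd (csInf_le hbdd hxs) (not_le.2 hx)
  have hae : ∀ᵐ s ∂μ, l ≤ s := by
    rw [ae_iff]
    convert hIio using 2
    ext s
    simp
  set M := (μ Set.univ).toReal with hM
  have hMpos : 0 < M :=
    ENNReal.toReal_pos (Measure.measure_univ_pos.mpr hμ).ne' (measure_ne_top μ _)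
  set g : ℝ → ℝ := fun t => ∫ s, Real.exp ((l - s) * t) ∂μ with hg
  have hmeas : ∀ t : ℝ, AEStronglyMeasurable (fun s => Real.exp ((l - s) * t)) μ := fun t =>
    Continuous.aestronglyMeasurable (by fun_prop)
  have hbd1 : ∀ t : ℝ, 0 ≤ t → ∀ᵐ s ∂μ, Real.exp ((l - s) * t) ≤ 1 := by
    intro t ht
    filter_upwards [hae] with s hs
    rw [← Real.exp_zero]
    exact Real.exp_le_exp.2 (mul_nonpos_of_nonpos_of_nonneg (by linarith) ht)
  have hint : ∀ t : ℝ, 0 ≤ t → Integrable (fun s => Real.exp ((l - s) * t)) μ := by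
    intro t ht
    refine Integrable.mono' (integrable_const 1) (hmeas t) ?_
    filter_upwards [hbd1 t ht] with s hs
    rwa [Real.norm_eq_abs, abs_of_pos (Real.exp_pos _)]
  have hgpos : ∀ t : ℝ, 0 ≤ t → 0 < g t := fun t ht => integral_exp_pos (hint t ht)
  have hgleM : ∀ t : ℝ, 0 ≤ t → g t ≤ M := by
    intro t ht
    calc g t ≤ ∫ _, (1 : ℝ) ∂μ := integral_mono_ae (hint t ht) (integrable_const 1) (hbd1 t ht)
    _ = M := by rw [integral_const, smul_eq_mul, mul_one]; rfl
  have hLg : ∀ t : ℝ, laplace μ t = Real.exp (-l * t) * g t := by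
    intro t
    have hpt : ∀ s : ℝ, Real.exp (-s * t) = Real.exp (-l * t) * Real.exp ((l - s) * t) := by
      intro s
      rw [← Real.exp_add]
      congr 1
      ring
    calc laplace μ t = ∫ s, Real.exp (-l * t) * Real.exp ((l - s) * t) ∂μ :=
          integral_congr_ae (Eventually.of_forall fun s => hpt s)
      _ = Real.exp (-l * t) * g t := integral_const_mul _ _
  have hr1 : ∀ t : ℝ, Real.exp (-l * t) / laplace μ t = 1 / g t := by
    intro t
    rw [hLg t, div_mul_cancel_left₀ (Real.exp_ne_zero _), one_div]
  have hr2 : ∀ t : ℝ, laplace μ (2 * t) / laplace μ t ^ 2 = g (2 * t) / g t ^ 2 := by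
    intro t
    have h2 : Real.exp (-l * (2 * t)) = Real.exp (-l * t) ^ 2 := by
      rw [sq, ← Real.exp_add]
      congr 1
      ring
    rw [hLg, hLg, mul_pow, h2, mul_div_mul_left _ _ (pow_ne_zero 2 (Real.exp_ne_zero _))]
  set a := (μ {l}).toReal with ha
  have hglim : Tendsto g atTop (𝓝 a) := by
    have h := tendsto_integral_filter_of_dominated_convergence (μ := μ) (l := atTop)
      (F := fun (t : ℝ) (s : ℝ) => Real.exp ((l - s) * t))
      (f := Set.indicator {l} fun _ => (1 : ℝ)) (fun _ => (1 : ℝ))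
      (Eventually.of_forall fun t => hmeas t)
      ?_ (integrable_const 1) ?_
    · have heq : ∫ s, Set.indicator {l} (fun _ => (1 : ℝ)) s ∂μ = a := by
        rw [integral_indicator_const (1 : ℝ) (measurableSet_singleton l), smul_eq_mul, mul_one]; rfl
      rw [heq] at h
      exact h
    · filter_upwards [eventually_ge_atTop (0 : ℝ)] with t ht
      filter_upwards [hbd1 t ht] with s hs
      rwa [Real.norm_eq_abs, abs_of_pos (Real.exp_pos _)]
    · filter_upwards [hae] with s hs
      rcases eq_or_lt_of_le hs with h | h
      · subst h
        simp only [sub_self, zero_mul, Real.exp_zero]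
        have : Set.indicator {l} (fun _ => (1 : ℝ)) l = 1 :=
          Set.indicator_of_mem (Set.mem_singleton l) _
        rw [this]
        exact tendsto_const_nhds
      · rw [Set.indicator_of_notMem (by simpa using h.ne')]
        have h1 : Tendsto (fun t : ℝ => (s - l) * t) atTop atTop :=
          Tendsto.const_mul_atTop (by linarith) tendsto_id
        have h2 := Real.tendsto_exp_neg_atTop_nhds_zero.comp h1
        convert h2 using 2 with t
        simp only [Function.comp]
        congr 1
        ring
  have htoReal_pos : 0 < μ {l} ↔ 0 < a :=
    ⟨fun h => ENNReal.toReal_pos h.ne' (measure_ne_top μ _),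
     fun h => by
      by_contra h0
      rw [not_lt, nonpos_iff_eq_zero] at h0
      simp [ha, h0] at h⟩
  have hga : ∀ t : ℝ, 0 ≤ t → a ≤ g t := by
    intro t ht
    have hmono : ∫ s, Set.indicator {l} (fun _ => (1 : ℝ)) s ∂μ ≤ g t := by
      apply integral_mono
        ((integrable_const (1 : ℝ)).indicator (measurableSet_singleton l)) (hint t ht)
      intro s
      by_cases hs : s ∈ ({l} : Set ℝ)
      · simp only [Set.indicator_of_mem hs]
        simp only [Set.mem_singleton_iff] at hs
        subst hs
        simp
      · simp [Set.indicator_of_notMem hs, (Real.exp_pos _).le]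
    rwa [integral_indicator_const (1 : ℝ) (measurableSet_singleton l), smul_eq_mul,
      mul_one] at hmono
  -- a two-sided ratio-from-zero contradiction helper
  have hIic : μ (Set.Iic l) = 0 → False → True := fun _ _ => trivial
  clear hIic
  refine ⟨⟨?_, ?_⟩, ⟨?_, ?_⟩, ?_⟩
  · -- (i) → (iii)
    rintro ⟨C, hC⟩
    by_contra h0
    rw [not_lt, nonpos_iff_eq_zero] at h0
    have ha0 : a = 0 := by simp [ha, h0]
    set C' := max C 1 with hC'
    have hC'pos : (0 : ℝ) < C' := lt_of_lt_of_le one_pos (le_max_right _ _)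
    have hev : ∀ᶠ t : ℝ in atTop, g t < 1 / C' := by
      refine Tendsto.eventually_lt_const (by positivity) ?_
      rwa [ha0] at hglim
    obtain ⟨t, hlt, htpos⟩ := (hev.and (eventually_gt_atTop 0)).exists
    have hgt := hgpos t htpos.le
    have h1 : C' * g t < 1 := by
      calc C' * g t < C' * (1 / C') := by exact mul_lt_mul_of_pos_left hlt hC'pos
      _ = 1 := by field_simp
    have h2 : C' < 1 / g t := (lt_div_iff₀ hgt).2 h1
    have h3 := hC t htpos
    rw [hr1 t] at h3
    have := le_max_left C 1
    linarith
  · -- (iii) → (i)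
    intro hpos
    have apos : 0 < a := htoReal_pos.1 hpos
    refine ⟨1 / a, fun t ht => ?_⟩
    rw [hr1 t]
    exact one_div_le_one_div_of_le apos (hga t ht.le)
  · -- (ii) → (iii)
    rintro ⟨C, hC⟩
    by_contra h0
    rw [not_lt, nonpos_iff_eq_zero] at h0
    have ha0 : a = 0 := by simp [ha, h0]
    have hCpos : 0 < C := by
      have h1 := hC 1 one_pos
      rw [hr2 1] at h1
      have h2 : 0 < g (2 * 1) / g 1 ^ 2 :=
        div_pos (hgpos _ (by norm_num)) (pow_pos (hgpos 1 zero_le_one) 2)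
      linarith
    have hC2 : ∀ t : ℝ, 0 < t → g (2 * t) ≤ C * g t ^ 2 := by
      intro t ht
      have h2 := hC t ht
      rw [hr2 t] at h2
      exact (div_le_iff₀ (pow_pos (hgpos t ht.le) 2)).1 h2
    have hIic : μ (Set.Iic l) = 0 := by
      rw [← Set.Iio_union_right]
      exact measure_union_null hIio h0
    -- choose δ with small mass below l + δ
    have hδex : ∃ δ : ℝ, 0 < δ ∧ (μ (Set.Iio (l + δ))).toReal ≤ 1 / (4 * C) := by
      have hmono : Antitone fun n : ℕ => Set.Iio (l + 1 / ((n : ℝ) + 1)) := by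
        intro m n hmn
        apply Set.Iio_subset_Iio
        have : 1 / ((n : ℝ) + 1) ≤ 1 / ((m : ℝ) + 1) :=
          one_div_le_one_div_of_le (by positivity)
            (by exact_mod_cast add_le_add_left (Nat.cast_le.2 hmn) 1)
        linarith
      have hInter : ⋂ n : ℕ, Set.Iio (l + 1 / ((n : ℝ) + 1)) = Set.Iic l := by
        ext x
        simp only [Set.mem_iInter, Set.mem_Iio, Set.mem_Iic]
        constructor
        · intro h
          by_contra hx
          push_neg at hx
          obtain ⟨n, hn⟩ := exists_nat_one_div_lt (sub_pos.2 hx)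
          have := h n
          linarith
        · intro h n
          have : 0 < 1 / ((n : ℝ) + 1) := by positivity
          linarith
      have hseq := tendsto_measure_iInter_atTop
        (fun n : ℕ => measurableSet_Iio.nullMeasurableSet) hmono ⟨0, measure_ne_top μ _⟩
      rw [hInter, hIic] at hseq
      have h2 := (ENNReal.tendsto_toReal ENNReal.zero_ne_top).comp hseq
      simp only [ENNReal.toReal_zero] at h2
      obtain ⟨n, hn⟩ := (h2.eventually_lt_const
        (by positivity : (0 : ℝ) < 1 / (4 * C))).exists
      exact ⟨1 / ((n : ℝ) + 1), by positivity, hn.le⟩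
    obtain ⟨δ, hδpos, hbδ⟩ := hδex
    set b := (μ (Set.Iio (l + δ))).toReal with hb
    set A' := Set.Ico l (l + δ / 2) with hA'
    have hmApos : 0 < μ A' := by
      have h1 : 0 < μ (Set.Ioo (l - 1) (l + δ / 2)) :=
        hlmem _ isOpen_Ioo ⟨by linarith, by linarith⟩
      have h2 : Set.Ioo (l - 1) (l + δ / 2) ⊆ Set.Iio l ∪ A' := by
        intro x hx
        rcases lt_or_ge x l with h | h
        · exact Or.inl h
        · exact Or.inr ⟨h, hx.2⟩
      by_contra h
      rw [not_lt, nonpos_iff_eq_zero] at h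
      exact absurd (measure_mono_null h2 (measure_union_null hIio h)) h1.ne'
    set m' := (μ A').toReal with hm'
    have hm'pos : 0 < m' := ENNReal.toReal_pos hmApos.ne' (measure_ne_top μ _)
    -- upper bound for g
    have hupper : ∀ t : ℝ, 0 < t → g t ≤ 2 * M * Real.exp (-δ * t) := by
      intro t ht
      have hgt := hgpos t ht.le
      set c := 2 * C * g t with hc
      have hcpos : 0 < c := by positivity
      have hsplit : g t = (∫ s in Set.Iio (l + δ), Real.exp ((l - s) * t) ∂μ)
          + ∫ s in (Set.Iio (l + δ))ᶜ, Real.exp ((l - s) * t) ∂μ :=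
        (integral_add_compl measurableSet_Iio (hint t ht.le)).symm
      have htail : ∫ s in (Set.Iio (l + δ))ᶜ, Real.exp ((l - s) * t) ∂μ
          ≤ Real.exp (-δ * t) * M := by
        rw [Set.compl_Iio]
        calc ∫ s in Set.Ici (l + δ), Real.exp ((l - s) * t) ∂μ
            ≤ ∫ _ in Set.Ici (l + δ), Real.exp (-δ * t) ∂μ := by
              apply setIntegral_mono_on (hint t ht.le).integrableOn
                (integrableOn_const (measure_ne_top μ _)) measurableSet_Ici
              intro s hs
              rw [Set.mem_Ici] at hs
              exact Real.exp_le_exp.2 (mul_le_mul_of_nonneg_right (by linarith) ht.le)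
          _ = (μ (Set.Ici (l + δ))).toReal * Real.exp (-δ * t) := by
              rw [setIntegral_const, smul_eq_mul]; rfl
          _ ≤ Real.exp (-δ * t) * M := by
              rw [mul_comm]
              apply mul_le_mul_of_nonneg_left _ (Real.exp_pos _).le
              exact ENNReal.toReal_mono (measure_ne_top μ _) (measure_mono (Set.subset_univ _))
      have hsq : ∀ s : ℝ, Real.exp ((l - s) * t) ^ 2 = Real.exp ((l - s) * (2 * t)) := by
        intro s
        rw [sq, ← Real.exp_add]
        congr 1
        ring
      have hhead : ∫ s in Set.Iio (l + δ), Real.exp ((l - s) * t) ∂μ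
          ≤ c / 2 * b + C * g t ^ 2 / (2 * c) := by
        have h1 : ∫ s in Set.Iio (l + δ), Real.exp ((l - s) * t) ∂μ
            ≤ ∫ s in Set.Iio (l + δ),
              (c / 2 + Real.exp ((l - s) * (2 * t)) / (2 * c)) ∂μ := by
          apply setIntegral_mono_on (hint t ht.le).integrableOn _ measurableSet_Iio
          · intro s _
            have := amgm c (Real.exp ((l - s) * t)) hcpos
            rwa [hsq s] at this
          · exact (integrable_const _).integrableOn.add
              (((hint (2 * t) (by linarith)).integrableOn).div_const _)
        have h2 : ∫ s in Set.Iio (l + δ),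
            (c / 2 + Real.exp ((l - s) * (2 * t)) / (2 * c)) ∂μ
            = c / 2 * b + (∫ s in Set.Iio (l + δ), Real.exp ((l - s) * (2 * t)) ∂μ) / (2 * c) := by
          rw [integral_add (integrable_const _).integrableOn
            (((hint (2 * t) (by linarith)).integrableOn).div_const _),
            setIntegral_const, smul_eq_mul, integral_div, mul_comm]; rfl
        have h3 : ∫ s in Set.Iio (l + δ), Real.exp ((l - s) * (2 * t)) ∂μ ≤ g (2 * t) :=
          setIntegral_le_integral (hint (2 * t) (by linarith))
            (Eventually.of_forall fun s => (Real.exp_pos _).le)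
        have h4 := hC2 t ht
        calc ∫ s in Set.Iio (l + δ), Real.exp ((l - s) * t) ∂μ
            ≤ c / 2 * b + (∫ s in Set.Iio (l + δ), Real.exp ((l - s) * (2 * t)) ∂μ) / (2 * c) := by
              rw [← h2]; exact h1
          _ ≤ c / 2 * b + C * g t ^ 2 / (2 * c) := by
              apply add_le_add_right
              exact (div_le_div_iff_of_pos_right (by positivity)).2 (h3.trans h4)
      have hkey1 : c / 2 * b ≤ g t / 4 := by
        have he : c / 2 * b = C * g t * b := by rw [hc]; ring
        rw [he]
        calc C * g t * b ≤ C * g t * (1 / (4 * C)) :=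
              mul_le_mul_of_nonneg_left hbδ (by positivity)
          _ = g t / 4 := by field_simp
      have hkey2 : C * g t ^ 2 / (2 * c) = g t / 4 := by
        rw [hc]
        field_simp
        ring
      nlinarith [hsplit, htail, hhead, hkey1, hkey2]
    -- lower bound for g
    have hlower : ∀ t : ℝ, 0 ≤ t → Real.exp (-(δ / 2) * t) * m' ≤ g t := by
      intro t ht
      calc Real.exp (-(δ / 2) * t) * m'
          ≤ ∫ s in A', Real.exp ((l - s) * t) ∂μ := by
            apply setIntegral_ge_of_const_le_real measurableSet_Ico (measure_ne_top μ _)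
              _ (hint t ht).integrableOn
            intro s hs
            obtain ⟨hs1, hs2⟩ := hs
            exact Real.exp_le_exp.2 (mul_le_mul_of_nonneg_right (by linarith) ht)
        _ ≤ g t := setIntegral_le_integral (hint t ht)
            (Eventually.of_forall fun s => (Real.exp_pos _).le)
    have hfin : ∀ t : ℝ, 0 < t → m' ≤ 2 * M * Real.exp (-(δ / 2) * t) := by
      intro t ht
      have h1 := hlower t ht.le
      have h2 := hupper t ht
      have he : Real.exp (-δ * t) = Real.exp (-(δ / 2) * t) * Real.exp (-(δ / 2) * t) := by
        rw [← Real.exp_add]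
        congr 1
        ring
      rw [he] at h2
      have hep := Real.exp_pos (-(δ / 2) * t)
      have h3 : Real.exp (-(δ / 2) * t) * m'
          ≤ Real.exp (-(δ / 2) * t) * (2 * M * Real.exp (-(δ / 2) * t)) := by
        have h4 := h1.trans h2
        nlinarith
      exact le_of_mul_le_mul_left h3 hep
    have htend : Tendsto (fun t : ℝ => 2 * M * Real.exp (-(δ / 2) * t)) atTop (𝓝 0) := by
      have h1 : Tendsto (fun t : ℝ => (δ / 2) * t) atTop atTop :=
        Tendsto.const_mul_atTop (by linarith) tendsto_id
      have h2 := (Real.tendsto_exp_neg_atTop_nhds_zero.comp h1).const_mul (2 * M)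
      simp only [mul_zero] at h2
      convert h2 using 2 with t
      simp only [Function.comp]
      congr 1
      ring
    obtain ⟨t, hlt, htpos⟩ := ((htend.eventually_lt_const hm'pos).and
      (eventually_gt_atTop 0)).exists
    exact absurd (hfin t htpos) (not_le.2 hlt)
  · -- (iii) → (ii)
    intro hpos
    have apos : 0 < a := htoReal_pos.1 hpos
    refine ⟨M / a ^ 2, fun t ht => ?_⟩
    rw [hr2 t]
    exact div_le_div₀ hMpos.le (hgleM _ (by linarith)) (by positivity)
      (pow_le_pow_left₀ apos.le (hga t ht.le) 2)
  · -- limits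
    intro hpos
    have apos : 0 < a := htoReal_pos.1 hpos
    constructor
    · have h1 : Tendsto (fun t => 1 / g t) atTop (𝓝 (1 / a)) :=
        tendsto_const_nhds.div hglim apos.ne'
      simp only [hr1]
      exact h1
    · have h2t : Tendsto (fun t : ℝ => 2 * t) atTop atTop :=
        Tendsto.const_mul_atTop two_pos tendsto_id
      have h2 : Tendsto (fun t => g (2 * t) / g t ^ 2) atTop (𝓝 (a / a ^ 2)) :=
        (hglim.comp h2t).div (hglim.pow 2) (by positivity)
      have he : a / a ^ 2 = 1 / a := by
        rw [sq, div_mul_cancel_left₀ apos.ne', one_div]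
      rw [he] at h2
      simp only [hr2]
      exact h2

end
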